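/- There exists a function F : W → (Φ → ℤ) such that: (i) for each simple root α ∈ Δ, F(r_α) = 1_α − 1_{−α} (the function taking value 1 at α, value −1 at −α, and 0 elsewhere); (ii) F is a 1-cocycle: F(uv)(φ) = F(u)(φ) + F(v)(u⁻¹φ) for all u, v ∈ W and φ ∈ Φ; and (iii) F(w)(φ) ∈ {0, 1} for every w ∈ W and every positive root φ ∈ Φ⁺. -/

import Mathlib

open RealInnerProductSpace

/-- Reflection in the hyperplane orthogonal to `v`:
`ρ_v(x) = x - 2(⟪v,x⟫/⟪v,v⟫) v`. -/
noncomputable def reflFun {V : Type*} [NormedAddCommGroup V] [InnerProductSpace ℝ V]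
    (v x : V) : V :=
  x - ((2 * ⟪v, x⟫ / ⟪v, v⟫) • v)

theorem reflFun_involutive {V : Type*} [NormedAddCommGroup V] [InnerProductSpace ℝ V]
    {v : V} (hv : v ≠ 0) (x : V) : reflFun v (reflFun v x) = x := by
  have h : ⟪v, v⟫ ≠ (0 : ℝ) := inner_self_ne_zero.mpr hv
  simp only [reflFun, inner_sub_right, inner_smul_right]
  field_simp
  ring_nf
  module

/-- The reflection `ρ_v` as a permutation (bijection) of `V`, for `v ≠ 0`. -/
noncomputable def reflPerm {V : Type*} [NormedAddCommGroup V] [InnerProductSpace ℝ V]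
    (v : V) (hv : v ≠ 0) : Equiv.Perm V :=
  ⟨reflFun v, reflFun v, reflFun_involutive hv, reflFun_involutive hv⟩

/-- The set of reflections in the simple roots `Δ ⊆ Φ` (the generators of `W`). -/
noncomputable def simpleRefls {V : Type*} [NormedAddCommGroup V] [InnerProductSpace ℝ V]
    (Φ Δ : Set V) (h0 : (0 : V) ∉ Φ) (hΔ : Δ ⊆ Φ) : Set (Equiv.Perm V) :=
  {g | ∃ (α : V) (hα : α ∈ Δ), g = reflPerm α fun h => h0 (h ▸ hΔ hα)}

open Classical in
/-- Let `Φ` be a finite reduced root system in a real inner product space `V`, with simple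
system `Δ` and positive roots `Φ⁺`, and let `W` be the group generated by the reflections
in the simple roots. Then there is a function `F : W → (Φ → ℤ)` such that (i)
`F(r_α) = 1_α - 1_{-α}` for each simple root `α`; (ii) `F` is a 1-cocycle:
`F(uv)(φ) = F(u)(φ) + F(v)(u⁻¹ φ)`; and (iii) `F(w)(φ) ∈ {0,1}` for every `w ∈ W` and
every positive root `φ ∈ Φ⁺`. -/
theorem exists_cocycle_root_system
    {V : Type*} [NormedAddCommGroup V] [InnerProductSpace ℝ V]
    (Φ : Set V) (hfin : Φ.Finite) (h0 : (0 : V) ∉ Φ)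
    (hneg : ∀ α ∈ Φ, -α ∈ Φ)
    (hred : ∀ α ∈ Φ, ∀ t : ℝ, t • α ∈ Φ → t • α = α ∨ t • α = -α)
    (hstab : ∀ α ∈ Φ, ∀ φ ∈ Φ, reflFun α φ ∈ Φ)
    (Δ : Set V) (hΔ : Δ ⊆ Φ)
    (hind : LinearIndependent ℝ ((↑) : Δ → V))
    (hsimple : ∀ φ ∈ Φ, ∃ c : Δ →₀ ℝ, (c.sum fun a r => r • (a : V)) = φ ∧
      ((∀ a, 0 ≤ c a) ∨ (∀ a, c a ≤ 0))) :
    ∃ F : (Subgroup.closure (simpleRefls Φ Δ h0 hΔ)) → V → ℤ,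
      (∀ (α : V) (hα : α ∈ Δ) (g : Subgroup.closure (simpleRefls Φ Δ h0 hΔ)),
        (g : Equiv.Perm V) = reflPerm α (fun h => h0 (h ▸ hΔ hα)) →
        ∀ φ ∈ Φ, F g φ = if φ = α then 1 else if φ = -α then -1 else 0) ∧
      (∀ u v : Subgroup.closure (simpleRefls Φ Δ h0 hΔ), ∀ φ ∈ Φ,
        F (u * v) φ = F u φ + F v ((u : Equiv.Perm V)⁻¹ φ)) ∧
      (∀ g : Subgroup.closure (simpleRefls Φ Δ h0 hΔ), ∀ φ ∈ Φ,
        (∃ c : Δ →₀ ℝ, (c.sum fun a r => r • (a : V)) = φ ∧ ∀ a, 0 ≤ c a) →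
        F g φ ∈ ({0, 1} : Set ℤ)) := by
  classical
  set T := Finsupp.linearCombination ℝ (fun a : Δ => (a : V)) with hTdef
  have hTinj : Function.Injective T := hind
  have hTapp : ∀ c : Δ →₀ ℝ, T c = c.sum fun a r => r • (a : V) := fun c =>
    Finsupp.linearCombination_apply _ _
  have hTsingle : ∀ (a : Δ) (r : ℝ), T (Finsupp.single a r) = r • (a : V) := fun a r => by
    simp [hTdef]
  set Pos : Set V := {x | ∃ c : Δ →₀ ℝ, T c = x ∧ ∀ a, 0 ≤ c a} with hPosdef
  set h : V → ℤ := fun x => if x ∈ Pos then 1 else 0 with hhdef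
  have h01 : ∀ x, h x = 0 ∨ h x = 1 := by
    intro x; by_cases hx : x ∈ Pos <;> simp [hhdef, hx]
  -- simple roots are positive
  have hΔpos : ∀ α (hα : α ∈ Δ), α ∈ Pos := by
    intro α hα
    refine ⟨Finsupp.single ⟨α, hα⟩ 1, by simp [hTsingle], fun a => ?_⟩
    rw [Finsupp.single_apply]
    split <;> norm_num
  -- negatives of simple roots are not positive
  have hΔneg : ∀ α (hα : α ∈ Δ), -α ∉ Pos := by
    rintro α hα ⟨c, hc, hcpos⟩
    have hz : T (c + Finsupp.single ⟨α, hα⟩ 1) = 0 := by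
      rw [map_add, hc, hTsingle]; simp
    have : c + Finsupp.single ⟨α, hα⟩ 1 = 0 := hTinj (by rw [hz, map_zero])
    have := DFunLike.congr_fun this ⟨α, hα⟩
    simp [Finsupp.single_apply] at this
    have := hcpos ⟨α, hα⟩
    linarith
  -- key lemma: r_α permutes positives other than α
  have key : ∀ α (hα : α ∈ Δ), ∀ φ ∈ Φ, φ ∈ Pos → φ ≠ α → reflFun α φ ∈ Pos := by
    rintro α hα φ hφ ⟨c, hc, hcpos⟩ hne
    have hαΦ : α ∈ Φ := hΔ hα
    have hα0 : α ≠ 0 := fun h => h0 (h ▸ hαΦ)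
    set αΔ : Δ := ⟨α, hα⟩ with hαΔ
    -- there is a ≠ αΔ with c a > 0
    have hex : ∃ a : Δ, a ≠ αΔ ∧ 0 < c a := by
      by_contra hall
      push_neg at hall
      have hzero : ∀ a : Δ, a ≠ αΔ → c a = 0 := fun a ha =>
        le_antisymm (hall a ha) (hcpos a)
      have hcs : c = Finsupp.single αΔ (c αΔ) := by
        ext a
        by_cases hcase : a = αΔ
        · subst hcase; simp [Finsupp.single_apply]
        · rw [Finsupp.single_apply, if_neg (fun hh => hcase hh.symm), hzero a hcase]
      have hφα : (c αΔ) • α = φ := by rw [← hTsingle αΔ (c αΔ), ← hcs, hc]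
      rcases hred α hαΦ (c αΔ) (hφα ▸ hφ) with hcase | hcase
      · exact hne (by rw [← hφα, hcase])
      · have : (c αΔ + 1) • α = 0 := by
          rw [add_smul, one_smul, hcase]; simp
        have h1 : c αΔ + 1 = 0 := by
          rcases smul_eq_zero.mp this with h' | h'
          · exact h'
          · exact absurd h' hα0
        have := hcpos αΔ
        linarith
    obtain ⟨a₀, ha₀ne, ha₀pos⟩ := hex
    set k : ℝ := 2 * ⟪α, φ⟫ / ⟪α, α⟫ with hk
    have hrefl : reflFun α φ = φ - k • α := rfl
    have hc' : T (c - Finsupp.single αΔ k) = reflFun α φ := by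
      rw [map_sub, hc, hTsingle, hrefl]
    have hrΦ : reflFun α φ ∈ Φ := hstab α hαΦ φ hφ
    obtain ⟨d, hd, hdsign⟩ := hsimple _ hrΦ
    rw [← hTapp] at hd
    have hdc : d = c - Finsupp.single αΔ k := hTinj (by rw [hd, hc'])
    have hda₀ : d a₀ = c a₀ := by
      rw [hdc, Finsupp.sub_apply, Finsupp.single_apply,
        if_neg (fun hh => ha₀ne hh.symm), sub_zero]
    rcases hdsign with hpos | hneg'
    · exact ⟨d, hd, hpos⟩
    · exact absurd (hda₀ ▸ hneg' a₀) (not_le.mpr ha₀pos)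
  -- reflFun α α = -α
  have hreflself : ∀ α (hα : α ∈ Δ), reflFun α α = -α := by
    intro α hα
    have hα0 : α ≠ 0 := fun h => h0 (h ▸ hΔ hα)
    have h2 : ⟪α, α⟫ ≠ (0 : ℝ) := inner_self_ne_zero.mpr hα0
    simp only [reflFun]
    rw [mul_div_assoc, div_self h2, mul_one]
    module
  have hreflneg : ∀ α (hα : α ∈ Δ), reflFun α (-α) = α := by
    intro α hα
    have hα0 : α ≠ 0 := fun h => h0 (h ▸ hΔ hα)
    conv_rhs => rw [← reflFun_involutive hα0 α]
    rw [hreflself α hα]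
  -- h is invariant under r_α away from ±α
  have hinv : ∀ α (hα : α ∈ Δ), ∀ φ ∈ Φ, φ ≠ α → φ ≠ -α → h (reflFun α φ) = h φ := by
    intro α hα φ hφ hne hne'
    have hα0 : α ≠ 0 := fun h => h0 (h ▸ hΔ hα)
    have hiff : φ ∈ Pos ↔ reflFun α φ ∈ Pos := by
      constructor
      · intro hp; exact key α hα φ hφ hp hne
      · intro hp
        have hrΦ : reflFun α φ ∈ Φ := hstab α (hΔ hα) φ hφ
        have hrne : reflFun α φ ≠ α := by
          intro hh
          apply hne'
          have := reflFun_involutive hα0 φ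
          rw [hh, hreflself α hα] at this
          exact this.symm
        have := key α hα _ hrΦ hp hrne
        rwa [reflFun_involutive hα0] at this
    simp only [hhdef]
    by_cases hp : φ ∈ Pos
    · rw [if_pos hp, if_pos (hiff.mp hp)]
    · rw [if_neg hp, if_neg (fun hh => hp (hiff.mpr hh))]
  refine ⟨fun g φ => h φ - h ((g : Equiv.Perm V)⁻¹ φ), ?_, ?_, ?_⟩
  · -- (i) values on simple reflections
    intro α hα g hg φ hφ
    dsimp only
    have hα0 : α ≠ 0 := fun h => h0 (h ▸ hΔ hα)
    have happ : ((g : Equiv.Perm V)⁻¹) φ = reflFun α φ := by rw [hg]; rfl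
    rw [happ]
    by_cases h1 : φ = α
    · subst h1
      rw [if_pos rfl, hreflself φ hα]
      have hp : φ ∈ Pos := hΔpos φ hα
      have hnp : -φ ∉ Pos := hΔneg φ hα
      simp [hhdef, hp, hnp]
    · rw [if_neg h1]
      by_cases h2 : φ = -α
      · subst h2
        rw [if_pos rfl, hreflneg α hα]
        have hp : α ∈ Pos := hΔpos α hα
        have hnp : -α ∉ Pos := hΔneg α hα
        simp [hhdef, hp, hnp]
      · rw [if_neg h2, hinv α hα φ hφ h1 h2, sub_self]
  · -- (ii) cocycle
    intro u v φ hφ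
    dsimp only
    have : (((u * v : Subgroup.closure (simpleRefls Φ Δ h0 hΔ)) : Equiv.Perm V))⁻¹ φ
        = ((v : Equiv.Perm V))⁻¹ (((u : Equiv.Perm V))⁻¹ φ) := by
      rw [Subgroup.coe_mul, mul_inv_rev, Equiv.Perm.mul_apply]
    rw [this]
    ring
  · -- (iii) values in {0,1} on positives
    rintro g φ hφ ⟨c, hc, hcpos⟩
    dsimp only
    have hp : φ ∈ Pos := ⟨c, by rw [hTapp]; exact hc, hcpos⟩
    have h1 : h φ = 1 := by simp [hhdef, hp]
    rcases h01 ((g : Equiv.Perm V)⁻¹ φ) with hz | ho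
    · right; rw [h1, hz]; rfl
    · left; rw [h1, ho]; rfl
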